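/- Let H be a graph that is either disconnected without isolated vertices, or connected with diameter at least six. Then dim_f(K1⊙H) = l_f(H). -/

import Mathlib

open Finset

variable {α β V : Type*}

/-- The corona product `G ⊙ H`. -/
def SimpleGraph.corona (G : SimpleGraph α) (H : SimpleGraph β) :
    SimpleGraph (α ⊕ α × β) where
  Adj x y :=
    match x, y with
    | Sum.inl u1, Sum.inl u2 => G.Adj u1 u2
    | Sum.inl u1, Sum.inr p => u1 = p.1
    | Sum.inr p, Sum.inl u2 => p.1 = u2
    | Sum.inr p, Sum.inr q => p.1 = q.1 ∧ H.Adj p.2 q.2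
  symm := by
    constructor
    rintro (u1 | p) (u2 | q) h
    · exact h.symm
    · exact h.symm
    · exact h.symm
    · exact ⟨h.1.symm, h.2.symm⟩
  loopless := by
    constructor
    rintro (u | p) h
    · exact G.irrefl h
    · exact H.irrefl h.2

/-- The lexicographic product `G[H]`. -/
def SimpleGraph.lexProd (G : SimpleGraph α) (H : SimpleGraph β) :
    SimpleGraph (α × β) where
  Adj x y := G.Adj x.1 y.1 ∨ (x.1 = y.1 ∧ H.Adj x.2 y.2)
  symm := by
    constructor
    rintro x y (h | ⟨h1, h2⟩)
    · exact Or.inl h.symm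
    · exact Or.inr ⟨h1.symm, h2.symm⟩
  loopless := by
    constructor
    rintro x (h | ⟨h1, h2⟩)
    · exact G.irrefl h
    · exact H.irrefl h2

open scoped Classical in
/-- `R_F{x,y}`: the set of vertices resolving `x` and `y` (distance measured by `edist`,
which is `∞` between vertices in different components). -/
noncomputable def resolvingFinset (F : SimpleGraph V) [Fintype V] (x y : V) : Finset V :=
  univ.filter fun z => F.edist x z ≠ F.edist y z

/-- `S_H{v₁,v₂} = {v₁,v₂} ∪ (N_H(v₁) Δ N_H(v₂))`. -/
def locatingFinset (H : SimpleGraph V) [Fintype V] [DecidableEq V]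
    [DecidableRel H.Adj] (v1 v2 : V) : Finset V :=
  {v1, v2} ∪ symmDiff (H.neighborFinset v1) (H.neighborFinset v2)

/-- A resolving function of `F`. -/
def IsResolvingFn (F : SimpleGraph V) [Fintype V] (g : V → ℝ) : Prop :=
  (∀ v, g v ∈ Set.Icc (0 : ℝ) 1) ∧
    ∀ x y : V, x ≠ y → 1 ≤ ∑ z ∈ resolvingFinset F x y, g z

/-- The fractional metric dimension `dim_f(F)`. -/
noncomputable def fracMetricDim (F : SimpleGraph V) [Fintype V] : ℝ :=
  sInf {w | ∃ g, IsResolvingFn F g ∧ w = ∑ v, g v}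

/-- A locating function of `H`. -/
def IsLocatingFn (H : SimpleGraph V) [Fintype V] [DecidableEq V]
    [DecidableRel H.Adj] (g : V → ℝ) : Prop :=
  (∀ v, g v ∈ Set.Icc (0 : ℝ) 1) ∧
    ∀ v1 v2 : V, v1 ≠ v2 → 1 ≤ ∑ v ∈ locatingFinset H v1 v2, g v

/-- `l_f(H)`: the minimum weight of a locating function. -/
noncomputable def fracLoc (H : SimpleGraph V) [Fintype V] [DecidableEq V]
    [DecidableRel H.Adj] : ℝ :=
  sInf {w | ∃ g, IsLocatingFn H g ∧ w = ∑ v, g v}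

open scoped Classical in
/-- `λ(H)`: maximum number of common neighbours of two adjacent vertices, `-1` if no edges. -/
noncomputable def lambdaMax (H : SimpleGraph V) [Fintype V] : ℤ :=
  if hne : (univ.filter fun p : V × V => H.Adj p.1 p.2).Nonempty then
    (univ.filter fun p : V × V => H.Adj p.1 p.2).sup' hne fun p =>
      ((univ.filter fun w => H.Adj p.1 w ∧ H.Adj p.2 w).card : ℤ)
  else -1

open scoped Classical in
/-- `μ(H)`: maximum number of common neighbours of two distinct nonadjacent vertices,
`0` for complete graphs. -/
noncomputable def muMax (H : SimpleGraph V) [Fintype V] : ℤ :=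
  if hne : (univ.filter fun p : V × V => p.1 ≠ p.2 ∧ ¬H.Adj p.1 p.2).Nonempty then
    (univ.filter fun p : V × V => p.1 ≠ p.2 ∧ ¬H.Adj p.1 p.2).sup' hne fun p =>
      ((univ.filter fun w => H.Adj p.1 w ∧ H.Adj p.2 w).card : ℤ)
  else 0

/-- A graph is vertex-transitive if its automorphism group is transitive on vertices. -/
def IsVertexTransitive (H : SimpleGraph V) : Prop :=
  ∀ u v : V, ∃ φ : H ≃g H, φ u = v

/-- Two distinct vertices are twins if they have the same closed or the same open
neighbourhood. -/
def SimpleGraph.Twins (G : SimpleGraph V) (u1 u2 : V) : Prop :=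
  u1 ≠ u2 ∧ (insert u1 (G.neighborSet u1) = insert u2 (G.neighborSet u2) ∨
    G.neighborSet u1 = G.neighborSet u2)

open scoped Classical in
/-- `m₁(G)`: number of vertices in twin-equivalence classes of type 1 (singletons). -/
noncomputable def m1 (G : SimpleGraph V) [Fintype V] : ℕ :=
  (univ.filter fun u => ∀ w, ¬G.Twins u w).card

open scoped Classical in
/-- `m₂(G)`: number of vertices in twin-equivalence classes of type 2 (cliques). -/
noncomputable def m2 (G : SimpleGraph V) [Fintype V] : ℕ :=
  (univ.filter fun u => ∃ w, G.Twins u w ∧ G.Adj u w).card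

open scoped Classical in
/-- `m₃(G)`: number of vertices in twin-equivalence classes of type 3 (independent sets). -/
noncomputable def m3 (G : SimpleGraph V) [Fintype V] : ℕ :=
  (univ.filter fun u => ∃ w, G.Twins u w ∧ ¬G.Adj u w).card

section Stmt10Aux

set_option linter.unusedSectionVars false

variable {β : Type*} [Fintype β] [DecidableEq β] (H : SimpleGraph β) [DecidableRel H.Adj]

private def coronaIota : β → (Unit ⊕ Unit × β) := fun b => Sum.inr ((), b)

@[simp] private lemma coronaIota_apply (b : β) :
    coronaIota b = (Sum.inr ((), b) : Unit ⊕ Unit × β) := rfl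

private lemma coronaIota_inj : Function.Injective (coronaIota (β := β)) := by
  intro a b h
  simpa [coronaIota] using h

private lemma corona_adj_cl (b : β) :
    ((⊥ : SimpleGraph Unit).corona H).Adj (Sum.inl ()) (Sum.inr ((), b)) := rfl

private lemma corona_adj_rr {a b : β} (hab : H.Adj a b) :
    ((⊥ : SimpleGraph Unit).corona H).Adj (Sum.inr ((), a)) (Sum.inr ((), b)) := ⟨rfl, hab⟩

private lemma corona_edist_cl (b : β) :
    ((⊥ : SimpleGraph Unit).corona H).edist (Sum.inl ()) (Sum.inr ((), b)) = 1 :=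
  SimpleGraph.edist_eq_one_iff_adj.mpr (corona_adj_cl H b)

private lemma corona_edist_rr_adj {a b : β} (hab : H.Adj a b) :
    ((⊥ : SimpleGraph Unit).corona H).edist (Sum.inr ((), a)) (Sum.inr ((), b)) = 1 :=
  SimpleGraph.edist_eq_one_iff_adj.mpr (corona_adj_rr H hab)

private lemma corona_edist_rr_nonadj {a b : β} (hab : a ≠ b) (hna : ¬ H.Adj a b) :
    ((⊥ : SimpleGraph Unit).corona H).edist (Sum.inr ((), a)) (Sum.inr ((), b)) = 2 := by
  have hle : ((⊥ : SimpleGraph Unit).corona H).edist (Sum.inr ((), a)) (Sum.inr ((), b)) ≤ 2 := by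
    have := SimpleGraph.edist_le
      ((((⊥ : SimpleGraph Unit).corona H).adj_symm (corona_adj_cl H a)).toWalk.append
        (corona_adj_cl H b).toWalk)
    simpa using this
  have hne0 : ((⊥ : SimpleGraph Unit).corona H).edist (Sum.inr ((), a)) (Sum.inr ((), b)) ≠ 0 :=
    fun h => by
      have := SimpleGraph.edist_eq_zero_iff.mp h
      exact hab (by simpa using this)
  have hne1 : ((⊥ : SimpleGraph Unit).corona H).edist (Sum.inr ((), a)) (Sum.inr ((), b)) ≠ 1 :=
    fun h => hna (SimpleGraph.edist_eq_one_iff_adj.mp h).2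
  have h1lt : 1 < ((⊥ : SimpleGraph Unit).corona H).edist (Sum.inr ((), a)) (Sum.inr ((), b)) :=
    lt_of_le_of_ne (Order.one_le_iff_pos.mpr (pos_iff_ne_zero.mpr hne0)) (Ne.symm hne1)
  have := Order.add_one_le_of_lt h1lt
  exact le_antisymm hle (by simpa [one_add_one_eq_two] using this)

private lemma mem_locatingFinset_iff {a b z : β} :
    z ∈ locatingFinset H a b ↔
      z = a ∨ z = b ∨ (H.Adj a z ∧ ¬ H.Adj b z) ∨ (H.Adj b z ∧ ¬ H.Adj a z) := by
  simp [locatingFinset, Finset.mem_symmDiff, SimpleGraph.mem_neighborFinset, or_assoc,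
    SimpleGraph.adj_comm]

private lemma resolvingFinset_comm {V : Type*} (F : SimpleGraph V) [Fintype V] (x y : V) :
    resolvingFinset F x y = resolvingFinset F y x := by
  classical
  ext z
  simp only [resolvingFinset, Finset.mem_filter, Finset.mem_univ, true_and]
  exact ne_comm

private lemma resolvingFinset_rr {a b : β} (hab : a ≠ b) :
    resolvingFinset ((⊥ : SimpleGraph Unit).corona H) (Sum.inr ((), a)) (Sum.inr ((), b))
      = (locatingFinset H a b).image coronaIota := by
  classical
  ext z
  simp only [resolvingFinset, Finset.mem_filter, Finset.mem_univ, true_and, Finset.mem_image]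
  constructor
  · intro hz
    rcases z with ⟨⟩ | ⟨⟨⟩, r⟩
    · exfalso
      apply hz
      rw [SimpleGraph.edist_comm, corona_edist_cl H a, SimpleGraph.edist_comm,
        corona_edist_cl H b]
    · refine ⟨r, ?_, rfl⟩
      rw [mem_locatingFinset_iff]
      by_contra hcon
      push_neg at hcon
      obtain ⟨h1, h2, h3, h4⟩ := hcon
      apply hz
      by_cases hadj1 : H.Adj a r <;> by_cases hadj2 : H.Adj b r
      · rw [corona_edist_rr_adj H hadj1, corona_edist_rr_adj H hadj2]
      · exact absurd (h3 hadj1) hadj2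
      · exact absurd (h4 hadj2) hadj1
      · rw [corona_edist_rr_nonadj H (Ne.symm h1) hadj1,
          corona_edist_rr_nonadj H (Ne.symm h2) hadj2]
  · rintro ⟨r, hr, rfl⟩
    simp only [coronaIota_apply]
    rw [mem_locatingFinset_iff] at hr
    rcases hr with rfl | rfl | ⟨h1, h2⟩ | ⟨h1, h2⟩
    · rw [SimpleGraph.edist_self]
      by_cases hadj : H.Adj b r
      · rw [corona_edist_rr_adj H hadj]; simp
      · rw [corona_edist_rr_nonadj H (Ne.symm hab) hadj]; simp
    · rw [SimpleGraph.edist_self (v := (Sum.inr ((), r) : Unit ⊕ Unit × β))]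
      by_cases hadj : H.Adj a r
      · rw [corona_edist_rr_adj H hadj]; simp
      · rw [corona_edist_rr_nonadj H hab hadj]; simp
    · rw [corona_edist_rr_adj H h1]
      by_cases hbr : b = r
      · subst hbr; rw [SimpleGraph.edist_self]; simp
      · rw [corona_edist_rr_nonadj H hbr h2]; decide
    · rw [corona_edist_rr_adj H h1]
      by_cases har : a = r
      · subst har; rw [SimpleGraph.edist_self]; simp
      · rw [corona_edist_rr_nonadj H har h2]
        intro hcon
        exact absurd hcon.symm (by decide)

private lemma resolvingFinset_cr (b : β) :
    resolvingFinset ((⊥ : SimpleGraph Unit).corona H) (Sum.inl ()) (Sum.inr ((), b))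
      = insert (Sum.inl ())
          (((Finset.univ : Finset β) \ H.neighborFinset b).image coronaIota) := by
  classical
  ext z
  simp only [resolvingFinset, Finset.mem_filter, Finset.mem_univ, true_and,
    Finset.mem_insert, Finset.mem_image, Finset.mem_sdiff, SimpleGraph.mem_neighborFinset]
  rcases z with ⟨⟩ | ⟨⟨⟩, r⟩
  · simp only [SimpleGraph.edist_self]
    constructor
    · intro _; exact Or.inl trivial
    · intro _
      rw [SimpleGraph.edist_comm, corona_edist_cl H b]
      decide
  · rw [corona_edist_cl H r]
    constructor
    · intro hz
      exact Or.inr ⟨r, fun hadj => hz (corona_edist_rr_adj H hadj).symm, rfl⟩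
    · rintro (hcon | ⟨r', hna, hr'⟩)
      · exact absurd hcon (by simp)
      · have hrr : r' = r := by simpa [coronaIota] using hr'
        rw [hrr] at hna
        by_cases hbr : b = r
        · subst hbr; rw [SimpleGraph.edist_self]; decide
        · rw [corona_edist_rr_nonadj H hbr hna]; decide

private lemma dist_le_one_of_adj {a b : β} (hab : H.Adj a b) : H.dist a b ≤ 1 := by
  have := SimpleGraph.dist_le hab.toWalk
  simpa using this

private lemma exists_pair (h : (¬H.Connected ∧ ∀ v : β, ∃ w : β, H.Adj v w) ∨
      (H.Connected ∧ ∃ u v : β, 6 ≤ H.dist u v)) (v : β) :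
    ∃ a b : β, a ≠ b ∧ ∀ z ∈ locatingFinset H a b, ¬ H.Adj v z := by
  rcases h with ⟨hnc, hmin⟩ | ⟨hc, u, u', hd⟩
  · have hnp : ¬ H.Preconnected := by
      intro hp
      obtain ⟨w, hw⟩ := hmin v
      exact hnc ((SimpleGraph.connected_iff H).mpr ⟨hp, ⟨v⟩⟩)
    rw [SimpleGraph.Preconnected] at hnp
    push_neg at hnp
    obtain ⟨x, y, hxy⟩ := hnp
    have hw : ∃ w, ¬ H.Reachable v w := by
      by_cases hvx : H.Reachable v x
      · exact ⟨y, fun hvy => hxy (hvx.symm.trans hvy)⟩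
      · exact ⟨x, hvx⟩
    obtain ⟨w, hw⟩ := hw
    obtain ⟨w', hww'⟩ := hmin w
    refine ⟨w, w', hww'.ne, ?_⟩
    intro z hz hvz
    have hwz : H.Reachable w z := by
      rw [mem_locatingFinset_iff] at hz
      rcases hz with rfl | rfl | ⟨h1, _⟩ | ⟨h1, _⟩
      · exact SimpleGraph.Reachable.refl z
      · exact hww'.reachable
      · exact h1.reachable
      · exact hww'.reachable.trans h1.reachable
    exact hw (hvz.reachable.trans hwz.symm)
  · have key : ∀ w0 : β, 4 ≤ H.dist v w0 →
        ∃ a b : β, a ≠ b ∧ ∀ z ∈ locatingFinset H a b, ¬ H.Adj v z := by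
      intro w0 h4
      have hvw0 : w0 ≠ v := by
        intro he
        rw [he, SimpleGraph.dist_self] at h4
        omega
      obtain ⟨p⟩ := hc.preconnected w0 v
      cases p with
      | nil => exact absurd rfl hvw0
      | @cons _ x _ hadj q =>
        refine ⟨w0, x, hadj.ne, ?_⟩
        intro z hz hvz
        have hdz : H.dist w0 z ≤ 2 := by
          rw [mem_locatingFinset_iff] at hz
          rcases hz with rfl | rfl | ⟨h1, _⟩ | ⟨h1, _⟩
          · rw [SimpleGraph.dist_self]; omega
          · have := dist_le_one_of_adj H hadj; omega
          · have := dist_le_one_of_adj H h1; omega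
          · have t1 := dist_le_one_of_adj H hadj
            have t2 := dist_le_one_of_adj H (h1.symm)
            have t3 := hc.dist_triangle (u := w0) (v := x) (w := z)
            have t4 : H.dist z x = H.dist x z := SimpleGraph.dist_comm
            omega
        have t5 := hc.dist_triangle (u := v) (v := z) (w := w0)
        have t6 := dist_le_one_of_adj H hvz
        have t7 : H.dist z w0 = H.dist w0 z := SimpleGraph.dist_comm
        omega
    by_cases h3 : 3 ≤ H.dist v u ∧ 3 ≤ H.dist v u'
    · refine ⟨u, u', ?_, ?_⟩
      · intro he
        rw [he, SimpleGraph.dist_self] at hd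
        omega
      · intro z hz hvz
        have t6 := dist_le_one_of_adj H hvz
        rw [mem_locatingFinset_iff] at hz
        rcases hz with rfl | rfl | ⟨h1, _⟩ | ⟨h1, _⟩
        · omega
        · omega
        · have t1 := dist_le_one_of_adj H h1
          have t2 := hc.dist_triangle (u := v) (v := z) (w := u)
          have t3 : H.dist z u = H.dist u z := SimpleGraph.dist_comm
          have t4 := hc.dist_triangle (u := u) (v := z) (w := v)
          have t5 : H.dist z v = H.dist v z := SimpleGraph.dist_comm
          omega
        · have t1 := dist_le_one_of_adj H h1
          have t2 := hc.dist_triangle (u := v) (v := z) (w := u')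
          have t3 : H.dist z u' = H.dist u' z := SimpleGraph.dist_comm
          omega
    · rw [not_and_or] at h3
      push_neg at h3
      have tri := hc.dist_triangle (u := u) (v := v) (w := u')
      have c1 : H.dist u v = H.dist v u := SimpleGraph.dist_comm
      rcases h3 with h3 | h3
      · exact key u' (by omega)
      · have tri2 := hc.dist_triangle (u := u') (v := v) (w := u)
        have c2 : H.dist u' v = H.dist v u' := SimpleGraph.dist_comm
        have c3 : H.dist u' u = H.dist u u' := SimpleGraph.dist_comm
        exact key u (by omega)

end Stmt10Aux

set_option synthInstance.maxHeartbeats 1000000 in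
set_option maxHeartbeats 1000000 in
/-- If `H` is disconnected without isolated vertices, or connected
with diameter at least six, then `dim_f(K₁ ⊙ H) = l_f(H)`. -/
theorem stmt_10 {β : Type*} [Fintype β] [DecidableEq β]
    (H : SimpleGraph β) [DecidableRel H.Adj] (hcb : 2 ≤ Fintype.card β)
    (h : (¬H.Connected ∧ ∀ v : β, ∃ w : β, H.Adj v w) ∨
      (H.Connected ∧ ∃ u v : β, 6 ≤ H.dist u v)) :
    fracMetricDim ((⊥ : SimpleGraph Unit).corona H) = fracLoc H := by
  classical
  set SA : Set ℝ :=
    {w | ∃ g, IsResolvingFn ((⊥ : SimpleGraph Unit).corona H) g ∧ w = ∑ v, g v} with hSA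
  set SB : Set ℝ := {w | ∃ g, IsLocatingFn H g ∧ w = ∑ v, g v} with hSB
  have hBne : SB.Nonempty := by
    refine ⟨∑ _v : β, (1:ℝ), fun _ => 1, ⟨fun v => ⟨zero_le_one, le_refl 1⟩, ?_⟩, rfl⟩
    intro v1 v2 hne
    rw [Finset.sum_const, nsmul_eq_mul, mul_one]
    have hmem : v1 ∈ locatingFinset H v1 v2 := (mem_locatingFinset_iff H).mpr (Or.inl rfl)
    exact_mod_cast Finset.card_pos.mpr ⟨v1, hmem⟩
  have hbddA : BddBelow SA := by
    refine ⟨0, ?_⟩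
    rintro w ⟨g, hg, rfl⟩
    exact Finset.sum_nonneg fun i _ => (hg.1 i).1
  have hbddB : BddBelow SB := by
    refine ⟨0, ?_⟩
    rintro w ⟨g, hg, rfl⟩
    exact Finset.sum_nonneg fun i _ => (hg.1 i).1
  have hBA : SB ⊆ SA := by
    rintro w ⟨g, hg, rfl⟩
    refine ⟨Sum.elim (fun _ => (0:ℝ)) (fun p => g p.2), ⟨?_, ?_⟩, ?_⟩
    · rintro (u | p)
      · exact ⟨le_refl 0, zero_le_one⟩
      · exact hg.1 p.2
    · have hcr : ∀ b : β, (1:ℝ) ≤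
          ∑ z ∈ resolvingFinset ((⊥ : SimpleGraph Unit).corona H)
            (Sum.inl ()) (Sum.inr ((), b)),
            Sum.elim (fun _ => (0:ℝ)) (fun p => g p.2) z := by
        intro b
        rw [resolvingFinset_cr H b, Finset.sum_insert (by simp [coronaIota]),
          Finset.sum_image (fun x _ y _ hxy => coronaIota_inj hxy)]
        simp only [Sum.elim_inl, coronaIota_apply, Sum.elim_inr, zero_add]
        obtain ⟨a', b', hne', hloc⟩ := exists_pair H h b
        have hsub : locatingFinset H a' b' ⊆ Finset.univ \ H.neighborFinset b :=
          fun z hz => Finset.mem_sdiff.mpr ⟨Finset.mem_univ z,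
            fun hn => hloc z hz ((H.mem_neighborFinset b z).mp hn)⟩
        calc (1:ℝ) ≤ ∑ z ∈ locatingFinset H a' b', g z := hg.2 a' b' hne'
          _ ≤ ∑ z ∈ Finset.univ \ H.neighborFinset b, g z :=
            Finset.sum_le_sum_of_subset_of_nonneg hsub (fun i _ _ => (hg.1 i).1)
      rintro (⟨⟩ | ⟨⟨⟩, a⟩) (⟨⟩ | ⟨⟨⟩, b⟩) hxy
      · exact absurd rfl hxy
      · exact hcr b
      · rw [resolvingFinset_comm]
        exact hcr a
      · have hab : a ≠ b := by
          intro he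
          apply hxy
          rw [he]
        rw [resolvingFinset_rr H hab,
          Finset.sum_image (fun x _ y _ hxy => coronaIota_inj hxy)]
        simp only [coronaIota_apply, Sum.elim_inr]
        exact hg.2 a b hab
    · symm
      rw [Fintype.sum_sum_type]
      simp [Fintype.sum_prod_type]
  have hAB : ∀ w ∈ SA, ∃ w' ∈ SB, w' ≤ w := by
    rintro w ⟨g, hg, rfl⟩
    refine ⟨∑ b : β, g (Sum.inr ((), b)),
      ⟨fun b => g (Sum.inr ((), b)), ⟨fun b => hg.1 _, ?_⟩, rfl⟩, ?_⟩
    · intro a b hab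
      have h1 := hg.2 (Sum.inr ((), a)) (Sum.inr ((), b)) (by simpa using hab)
      rw [resolvingFinset_rr H hab,
        Finset.sum_image (fun x _ y _ hxy => coronaIota_inj hxy)] at h1
      simpa only [coronaIota_apply] using h1
    · have hsplit : ∑ v : Unit ⊕ Unit × β, g v
          = g (Sum.inl ()) + ∑ b : β, g (Sum.inr ((), b)) := by
        rw [Fintype.sum_sum_type]
        simp [Fintype.sum_prod_type]
      rw [hsplit]
      have h0 := (hg.1 (Sum.inl ())).1
      linarith
  have hAne : SA.Nonempty := hBne.mono hBA
  rw [fracMetricDim, fracLoc, ← hSA, ← hSB]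
  refine le_antisymm (csInf_le_csInf hbddA hBne hBA) ?_
  refine le_csInf hAne fun w hw => ?_
  obtain ⟨w', hw', hle⟩ := hAB w hw
  exact le_trans (csInf_le hbddB hw') hle
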